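/- Suppose α ≥ 1 and let q > r > 1. Then for all z, w ∈ ℝ^d with |z| = r and |w| = q: if α > 1 then D(z,w) ≥ (r^{1−α} − q^{1−α}) / (ρ̄ · κ̄ · (α−1)), and if α = 1 then D(z,w) ≥ (ρ̄ κ̄)^{-1} · log(q/r). -/

import Mathlib

open MeasureTheory Metric
open scoped ENNReal NNReal Pointwise

/-- The `D`-length of the linear segment from `a` to `b`, parametrized by `μ`-length:
`μ(b-a) · ∫_0^1 f(a + t(b-a))⁻¹ dt`. -/
noncomputable def segLen {d : ℕ} (μ f : EuclideanSpace ℝ (Fin d) → ℝ)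
    (a b : EuclideanSpace ℝ (Fin d)) : ℝ≥0∞ :=
  ENNReal.ofReal (μ (b - a)) *
    ∫⁻ t in Set.Ioo (0 : ℝ) 1, ENNReal.ofReal ((f (a + t • (b - a)))⁻¹)

/-- `D(z,w)`: the infimum of `D`-lengths of piecewise linear paths from `z` to `w`,
encoded via their finite sequences of vertices. -/
noncomputable def Dmet {d : ℕ} (μ f : EuclideanSpace ℝ (Fin d) → ℝ)
    (z w : EuclideanSpace ℝ (Fin d)) : ℝ≥0∞ :=
  ⨅ (n : ℕ) (p : Fin (n + 1) → EuclideanSpace ℝ (Fin d)) (_ : p 0 = z)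
    (_ : p (Fin.last n) = w),
    ∑ i : Fin n, segLen μ f (p i.castSucc) (p i.succ)

lemma ofReal_sum_le {ι : Type*} (s : Finset ι) (g : ι → ℝ) :
    ENNReal.ofReal (∑ i ∈ s, g i) ≤ ∑ i ∈ s, ENNReal.ofReal (g i) := by
  classical
  induction s using Finset.induction_on with
  | empty => simp
  | insert _ _ ha ih =>
    rw [Finset.sum_insert ha, Finset.sum_insert ha]
    exact ENNReal.ofReal_add_le.trans (add_le_add le_rfl ih)

/-- Truncated power integrand. -/
noncomputable def psi (α : ℝ) (u : ℝ) : ℝ := (max u 1) ^ (-α)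

lemma psi_nonneg (α u : ℝ) : 0 ≤ psi α u :=
  Real.rpow_nonneg (le_trans zero_le_one (le_max_right _ _)) _

lemma psi_continuous (α : ℝ) : Continuous (psi α) := by
  refine Continuous.rpow_const (continuous_id.max continuous_const) fun x => Or.inl ?_
  have : (1 : ℝ) ≤ max x 1 := le_max_right _ _
  exact ne_of_gt (lt_of_lt_of_le one_pos this)

lemma psi_intervalIntegrable (α x y : ℝ) : IntervalIntegrable (psi α) volume x y :=
  (psi_continuous α).intervalIntegrable x y

/-- Antiderivative of the truncated power. -/
noncomputable def Phi (α s : ℝ) : ℝ := ∫ u in (1:ℝ)..s, psi α u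

lemma Phi_sub (α x y : ℝ) : Phi α y - Phi α x = ∫ u in x..y, psi α u :=
  intervalIntegral.integral_interval_sub_left (psi_intervalIntegrable α 1 y)
    (psi_intervalIntegrable α 1 x)

lemma segLen_ge {d : ℕ} {α : ℝ} (hα : 0 ≤ α)
    (f μ : EuclideanSpace ℝ (Fin d) → ℝ) {κ ρ : ℝ} (hκ0 : 0 < κ) (hρ0 : 0 < ρ)
    (hfb : ∀ x : EuclideanSpace ℝ (Fin d), x ≠ 0 → 0 < f x ∧ f x ≤ κ * ‖x‖ ^ α)
    (hρub : ∀ v : EuclideanSpace ℝ (Fin d), ‖v‖ ≤ ρ * μ v)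
    (hμ0 : ∀ v, 0 ≤ μ v)
    (a b : EuclideanSpace ℝ (Fin d)) :
    ENNReal.ofReal ((ρ * κ)⁻¹ * (Phi α ‖b‖ - Phi α ‖a‖)) ≤ segLen μ f a b := by
  by_cases hv : b - a = 0
  · have hb : b = a := sub_eq_zero.mp hv
    simp [hb]
  have hvn : 0 < ‖b - a‖ := norm_pos_iff.mpr hv
  set v := b - a with hvdef
  -- pointwise bound on the integrand, away from the (at most one) zero of the segment
  have key : ∀ t ∈ Set.Ioo (0:ℝ) 1, a + t • v ≠ 0 →
      κ⁻¹ * psi α (‖v‖ * t + ‖a‖) ≤ (f (a + t • v))⁻¹ := by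
    intro t ht hx
    obtain ⟨hf1, hf2⟩ := hfb _ hx
    have hM1 : (1:ℝ) ≤ max (‖v‖ * t + ‖a‖) 1 := le_max_right _ _
    have hM0 : (0:ℝ) < max (‖v‖ * t + ‖a‖) 1 := lt_of_lt_of_le one_pos hM1
    have hxle : ‖a + t • v‖ ≤ max (‖v‖ * t + ‖a‖) 1 := by
      refine le_trans ?_ (le_max_left _ _)
      calc ‖a + t • v‖ ≤ ‖a‖ + ‖t • v‖ := norm_add_le _ _
        _ = ‖a‖ + t * ‖v‖ := by rw [norm_smul, Real.norm_eq_abs, abs_of_pos ht.1]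
        _ = ‖v‖ * t + ‖a‖ := by ring
    have h3 : f (a + t • v) ≤ κ * (max (‖v‖ * t + ‖a‖) 1) ^ α := by
      refine hf2.trans ?_
      exact mul_le_mul_of_nonneg_left (Real.rpow_le_rpow (norm_nonneg _) hxle hα) hκ0.le
    have h4 : (κ * (max (‖v‖ * t + ‖a‖) 1) ^ α)⁻¹ ≤ (f (a + t • v))⁻¹ :=
      inv_anti₀ hf1 h3
    calc κ⁻¹ * psi α (‖v‖ * t + ‖a‖)
        = (κ * (max (‖v‖ * t + ‖a‖) 1) ^ α)⁻¹ := by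
          rw [psi, Real.rpow_neg hM0.le, mul_inv]
      _ ≤ _ := h4
  -- the set of times where the segment hits the origin is null
  have hzero : (volume : Measure ℝ) {t : ℝ | a + t • v = 0} = 0 := by
    apply Set.Subsingleton.measure_zero
    intro t1 h1 t2 h2
    have h1' : a + t1 • v = 0 := h1
    have h2' : a + t2 • v = 0 := h2
    have hsv : (t1 - t2) • v = 0 := by
      rw [sub_smul]
      have : t1 • v = t2 • v := by
        have := h1'.trans h2'.symm
        exact add_left_cancel this
      rw [this, sub_self]
    rcases smul_eq_zero.mp hsv with h | h
    · linarith [sub_eq_zero.mp (by linarith [h] : t1 - t2 = (0:ℝ))]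
    · exact absurd h hv
  have hae : ∀ᵐ t ∂(volume.restrict (Set.Ioo (0:ℝ) 1)),
      ENNReal.ofReal (κ⁻¹ * psi α (‖v‖ * t + ‖a‖)) ≤ ENNReal.ofReal ((f (a + t • v))⁻¹) := by
    have h0 : ∀ᵐ t ∂(volume : Measure ℝ), a + t • v ≠ 0 := by
      rw [ae_iff]
      simpa using hzero
    filter_upwards [ae_restrict_mem measurableSet_Ioo, ae_restrict_of_ae h0] with t ht hne
    exact ENNReal.ofReal_le_ofReal (key t ht hne)
  have hmono := lintegral_mono_ae hae
  -- compute the lower lintegral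
  have hcont : Continuous fun t : ℝ => κ⁻¹ * psi α (‖v‖ * t + ‖a‖) := by
    exact continuous_const.mul ((psi_continuous α).comp (by continuity))
  have hint : IntegrableOn (fun t : ℝ => κ⁻¹ * psi α (‖v‖ * t + ‖a‖)) (Set.Ioo 0 1) :=
    ((hcont.intervalIntegrable 0 1).1).mono_set Set.Ioo_subset_Ioc_self
  have heq : (∫⁻ t in Set.Ioo (0:ℝ) 1, ENNReal.ofReal (κ⁻¹ * psi α (‖v‖ * t + ‖a‖)))
      = ENNReal.ofReal (∫ t in Set.Ioo (0:ℝ) 1, κ⁻¹ * psi α (‖v‖ * t + ‖a‖)) :=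
    (ofReal_integral_eq_lintegral_ofReal hint
      (Filter.Eventually.of_forall fun t =>
        mul_nonneg (inv_nonneg.mpr hκ0.le) (psi_nonneg _ _))).symm
  have hIoo : (∫ t in Set.Ioo (0:ℝ) 1, κ⁻¹ * psi α (‖v‖ * t + ‖a‖))
      = κ⁻¹ * (‖v‖⁻¹ * ∫ u in ‖a‖..(‖v‖ + ‖a‖), psi α u) := by
    rw [← integral_Ioc_eq_integral_Ioo, ← intervalIntegral.integral_of_le zero_le_one,
      intervalIntegral.integral_const_mul,
      intervalIntegral.integral_comp_mul_add (psi α) hvn.ne' ‖a‖]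
    simp [smul_eq_mul]
  set J := ∫ u in ‖a‖..(‖v‖ + ‖a‖), psi α u with hJ
  have hJ0 : 0 ≤ J :=
    intervalIntegral.integral_nonneg (by linarith [norm_nonneg a]) fun u _ => psi_nonneg α u
  have hble : ‖b‖ ≤ ‖v‖ + ‖a‖ := by
    calc ‖b‖ = ‖v + a‖ := by rw [hvdef]; congr 1; abel
      _ ≤ ‖v‖ + ‖a‖ := norm_add_le _ _
  have hPhiJ : Phi α ‖b‖ - Phi α ‖a‖ ≤ J := by
    rw [Phi_sub]
    have hsub : J - ∫ u in ‖a‖..‖b‖, psi α u = ∫ u in ‖b‖..(‖v‖ + ‖a‖), psi α u :=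
      intervalIntegral.integral_interval_sub_left (psi_intervalIntegrable _ _ _)
        (psi_intervalIntegrable _ _ _)
    have h2 : 0 ≤ ∫ u in ‖b‖..(‖v‖ + ‖a‖), psi α u :=
      intervalIntegral.integral_nonneg hble fun u _ => psi_nonneg α u
    linarith
  have hμv : ‖v‖ / ρ ≤ μ v := by
    rw [div_le_iff₀ hρ0]
    rw [mul_comm]
    exact hρub v
  have hnn : 0 ≤ κ⁻¹ * (‖v‖⁻¹ * J) :=
    mul_nonneg (inv_nonneg.mpr hκ0.le) (mul_nonneg (inv_nonneg.mpr hvn.le) hJ0)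
  calc ENNReal.ofReal ((ρ * κ)⁻¹ * (Phi α ‖b‖ - Phi α ‖a‖))
      ≤ ENNReal.ofReal ((‖v‖ / ρ) * (κ⁻¹ * (‖v‖⁻¹ * J))) := by
        apply ENNReal.ofReal_le_ofReal
        have hEq : (‖v‖ / ρ) * (κ⁻¹ * (‖v‖⁻¹ * J)) = (ρ * κ)⁻¹ * J := by
          field_simp
        rw [hEq]
        exact mul_le_mul_of_nonneg_left hPhiJ
          (inv_nonneg.mpr (mul_nonneg hρ0.le hκ0.le))
    _ ≤ ENNReal.ofReal (μ v * (κ⁻¹ * (‖v‖⁻¹ * J))) := by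
        apply ENNReal.ofReal_le_ofReal
        exact mul_le_mul_of_nonneg_right hμv hnn
    _ = ENNReal.ofReal (μ v) * ENNReal.ofReal (κ⁻¹ * (‖v‖⁻¹ * J)) := ENNReal.ofReal_mul (hμ0 v)
    _ ≤ segLen μ f a b := by
        rw [segLen, ← hvdef]
        refine mul_le_mul_of_nonneg_left ?_ (zero_le)
        rw [← hIoo, ← heq]
        exact hmono

theorem stmt6 (d : ℕ) (hd : 0 < d) (α : ℝ) (hα : 1 ≤ α)
    (f₀ : EuclideanSpace ℝ (Fin d) → ℝ) (K : NNReal)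
    (hLip : LipschitzOnWith K f₀ (sphere (0 : EuclideanSpace ℝ (Fin d)) 1))
    (hpos : ∀ z ∈ sphere (0 : EuclideanSpace ℝ (Fin d)) 1, 0 < f₀ z)
    (f : EuclideanSpace ℝ (Fin d) → ℝ) (hf0 : f 0 = 0)
    (hf : ∀ z : EuclideanSpace ℝ (Fin d), z ≠ 0 → f z = ‖z‖ ^ α * f₀ (‖z‖⁻¹ • z))
    (μ : EuclideanSpace ℝ (Fin d) → ℝ)
    (hμ_add : ∀ z w, μ (z + w) ≤ μ z + μ w)
    (hμ_smul : ∀ (c : ℝ) z, μ (c • z) = |c| * μ z)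
    (hμ_eq : ∀ z, μ z = 0 ↔ z = 0)
    (ρ : ℝ) (hρ : IsLUB {r : ℝ | ∃ z : EuclideanSpace ℝ (Fin d), z ≠ 0 ∧ r = ‖z‖ / μ z} ρ)
    (κ : ℝ) (hκ : IsLUB (f₀ '' sphere (0 : EuclideanSpace ℝ (Fin d)) 1) κ)
    (q r : ℝ) (hr : 1 < r) (hq : r < q)
    (z w : EuclideanSpace ℝ (Fin d)) (hz : ‖z‖ = r) (hw : ‖w‖ = q) :
    (1 < α →
      ENNReal.ofReal ((r ^ (1 - α) - q ^ (1 - α)) / (ρ * κ * (α - 1))) ≤ Dmet μ f z w) ∧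
    (α = 1 →
      ENNReal.ofReal ((ρ * κ)⁻¹ * Real.log (q / r)) ≤ Dmet μ f z w) := by
  have hz0 : z ≠ 0 := by
    intro h
    rw [h, norm_zero] at hz
    linarith
  have hκ0 : 0 < κ := by
    have hu : ‖z‖⁻¹ • z ∈ sphere (0 : EuclideanSpace ℝ (Fin d)) 1 := by
      rw [mem_sphere_zero_iff_norm]
      exact norm_smul_inv_norm hz0
    exact lt_of_lt_of_le (hpos _ hu) (hκ.1 ⟨_, hu, rfl⟩)
  have hμnull : μ 0 = 0 := (hμ_eq 0).mpr rfl
  have hμ0 : ∀ v, 0 ≤ μ v := by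
    intro v
    have h1 : μ (-v) = μ v := by
      have := hμ_smul (-1) v
      simpa using this
    have h2 := hμ_add v (-v)
    rw [add_neg_cancel, hμnull, h1] at h2
    linarith
  have hρ0 : 0 < ρ := by
    have hμz : 0 < μ z :=
      (hμ0 z).lt_of_ne fun h => hz0 ((hμ_eq z).mp h.symm)
    have hmem := hρ.1 (⟨z, hz0, rfl⟩ :
      ‖z‖ / μ z ∈ {r : ℝ | ∃ z' : EuclideanSpace ℝ (Fin d), z' ≠ 0 ∧ r = ‖z'‖ / μ z'})
    have hpos' : 0 < ‖z‖ / μ z := div_pos (norm_pos_iff.mpr hz0) hμz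
    linarith
  have hρub : ∀ v : EuclideanSpace ℝ (Fin d), ‖v‖ ≤ ρ * μ v := by
    intro v
    by_cases hv : v = 0
    · simp [hv, hμnull]
    · have hμv : 0 < μ v := (hμ0 v).lt_of_ne fun h => hv ((hμ_eq v).mp h.symm)
      have hle := hρ.1 (⟨v, hv, rfl⟩ :
        ‖v‖ / μ v ∈ {r : ℝ | ∃ z' : EuclideanSpace ℝ (Fin d), z' ≠ 0 ∧ r = ‖z'‖ / μ z'})
      calc ‖v‖ = (‖v‖ / μ v) * μ v := by field_simp
        _ ≤ ρ * μ v := mul_le_mul_of_nonneg_right hle hμv.le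
  have hfb : ∀ x : EuclideanSpace ℝ (Fin d), x ≠ 0 → 0 < f x ∧ f x ≤ κ * ‖x‖ ^ α := by
    intro x hx
    have hu : ‖x‖⁻¹ • x ∈ sphere (0 : EuclideanSpace ℝ (Fin d)) 1 := by
      rw [mem_sphere_zero_iff_norm]
      exact norm_smul_inv_norm hx
    have hxp : 0 < ‖x‖ := norm_pos_iff.mpr hx
    rw [hf x hx]
    constructor
    · exact mul_pos (Real.rpow_pos_of_pos hxp α) (hpos _ hu)
    · rw [mul_comm κ _]
      exact mul_le_mul_of_nonneg_left (hκ.1 ⟨_, hu, rfl⟩)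
        (Real.rpow_nonneg (norm_nonneg x) α)
  -- main lower bound through the antiderivative Phi
  open Fin.NatCast in
  have main : ENNReal.ofReal ((ρ * κ)⁻¹ * (Phi α q - Phi α r)) ≤ Dmet μ f z w := by
    rw [Dmet]
    refine le_iInf fun n => le_iInf fun p => le_iInf fun h0 => le_iInf fun hl => ?_
    set G : ℕ → ℝ := fun k => Phi α ‖p (k : Fin (n + 1))‖ with hG
    have tele : ∑ i : Fin n, ((ρ * κ)⁻¹ * (Phi α ‖p i.succ‖ - Phi α ‖p i.castSucc‖))
        = (ρ * κ)⁻¹ * (Phi α q - Phi α r) := by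
      rw [← Finset.mul_sum]
      congr 1
      have hstep : ∀ i : Fin n,
          Phi α ‖p i.succ‖ - Phi α ‖p i.castSucc‖ = G (↑i + 1) - G ↑i := by
        intro i
        have h1 : ((↑i + 1 : ℕ) : Fin (n + 1)) = i.succ := by
          apply Fin.ext
          simp only [Fin.val_natCast, Fin.val_succ]
          exact Nat.mod_eq_of_lt (by omega)
        have h2 : ((↑i : ℕ) : Fin (n + 1)) = i.castSucc := by
          apply Fin.ext
          simp only [Fin.val_natCast, Fin.coe_castSucc]
          exact Nat.mod_eq_of_lt (by omega)
        rw [hG]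
        simp only [h1, h2]
      calc ∑ i : Fin n, (Phi α ‖p i.succ‖ - Phi α ‖p i.castSucc‖)
          = ∑ i : Fin n, (G (↑i + 1) - G ↑i) := Finset.sum_congr rfl fun i _ => hstep i
        _ = ∑ i ∈ Finset.range n, (G (i + 1) - G i) :=
            Fin.sum_univ_eq_sum_range (fun k => G (k + 1) - G k) n
        _ = G n - G 0 := Finset.sum_range_sub G n
        _ = Phi α q - Phi α r := by
            have hn : ((n : ℕ) : Fin (n + 1)) = Fin.last n := by
              apply Fin.ext
              simp [Fin.val_last, Nat.mod_eq_of_lt (Nat.lt_succ_self n)]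
            have h0' : ((0 : ℕ) : Fin (n + 1)) = 0 := by simp
            rw [hG]
            simp only [hn, h0', hl, h0, hz, hw]
    calc ENNReal.ofReal ((ρ * κ)⁻¹ * (Phi α q - Phi α r))
        = ENNReal.ofReal
            (∑ i : Fin n, ((ρ * κ)⁻¹ * (Phi α ‖p i.succ‖ - Phi α ‖p i.castSucc‖))) := by
          rw [tele]
      _ ≤ ∑ i : Fin n,
            ENNReal.ofReal ((ρ * κ)⁻¹ * (Phi α ‖p i.succ‖ - Phi α ‖p i.castSucc‖)) :=
          ofReal_sum_le _ _
      _ ≤ ∑ i : Fin n, segLen μ f (p i.castSucc) (p i.succ) :=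
          Finset.sum_le_sum fun i _ =>
            segLen_ge (by linarith) f μ hκ0 hρ0 hfb hρub hμ0 _ _
  constructor
  · intro hα1
    have hΦ : Phi α q - Phi α r = (r ^ (1 - α) - q ^ (1 - α)) / (α - 1) := by
      rw [Phi_sub]
      have hcongr : (∫ u in r..q, psi α u) = ∫ u in r..q, u ^ (-α) := by
        apply intervalIntegral.integral_congr
        intro u hu
        rw [Set.uIcc_of_le hq.le] at hu
        have h1 : (1:ℝ) ≤ u := le_trans hr.le hu.1
        simp [psi, max_eq_left h1]
      open intervalIntegral in
      rw [hcongr, integral_rpow (Or.inr ⟨by linarith, by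
        rw [Set.uIcc_of_le hq.le]
        simp only [Set.mem_Icc, not_and]
        intro h
        linarith⟩)]
      have e1 : -α + 1 = 1 - α := by ring
      have e2 : (1 - α) = -(α - 1) := by ring
      rw [e1, e2, div_neg, ← neg_div, neg_sub]
    have hgoal : (r ^ (1 - α) - q ^ (1 - α)) / (ρ * κ * (α - 1))
        = (ρ * κ)⁻¹ * ((r ^ (1 - α) - q ^ (1 - α)) / (α - 1)) := by
      rw [inv_mul_eq_div, div_div, mul_comm (α - 1)]
    rw [hgoal, ← hΦ]
    exact main
  · intro hα1
    subst hα1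
    have hΦ : Phi 1 q - Phi 1 r = Real.log (q / r) := by
      rw [Phi_sub]
      have hcongr : (∫ u in r..q, psi 1 u) = ∫ u in r..q, u⁻¹ := by
        apply intervalIntegral.integral_congr
        intro u hu
        rw [Set.uIcc_of_le hq.le] at hu
        have h1 : (1:ℝ) ≤ u := le_trans hr.le hu.1
        rw [psi, max_eq_left h1, Real.rpow_neg_one]
      open intervalIntegral in
      rw [hcongr, integral_inv (by
        rw [Set.uIcc_of_le hq.le]
        simp only [Set.mem_Icc, not_and]
        intro h
        linarith)]
    rw [← hΦ]
    exact main
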